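/- Let x, μ ∈ ℝ^d with x ≠ μ, let g ∈ ℝ^d be a unit vector with ⟨g, (μ − x)/‖μ − x‖⟩ ≥ 1/15, and let d be a real number with 0.95·‖x − μ‖ ≤ d ≤ 1.25·‖x − μ‖. Then ‖x + (d/20)·g − μ‖² ≤ (1 − 1/500)·‖x − μ‖². -/

import Mathlib

noncomputable section

theorem stmt5 {D : ℕ} (x μ : EuclideanSpace ℝ (Fin D)) (hxμ : x ≠ μ)
    (g : EuclideanSpace ℝ (Fin D)) (hg : ‖g‖ = 1)
    (halign : (1 / 15 : ℝ) ≤ (inner ℝ g (‖μ - x‖⁻¹ • (μ - x)) : ℝ))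
    (d : ℝ) (hd₁ : (0.95 : ℝ) * ‖x - μ‖ ≤ d) (hd₂ : d ≤ (1.25 : ℝ) * ‖x - μ‖) :
    ‖x + (d / 20) • g - μ‖ ^ 2 ≤ (1 - 1 / 500 : ℝ) * ‖x - μ‖ ^ 2 := by
  set r := ‖x - μ‖ with hr
  have hr0 : 0 < r := by
    rw [hr, norm_pos_iff, sub_ne_zero]; exact hxμ
  have hrμ : ‖μ - x‖ = r := by rw [norm_sub_rev]
  set t : ℝ := inner ℝ g (μ - x) with ht
  have h1 : (r / 15 : ℝ) ≤ t := by
    rw [real_inner_smul_right, hrμ] at halign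
    have := mul_le_mul_of_nonneg_left halign hr0.le
    rw [mul_inv_cancel_left₀ hr0.ne'] at this
    linarith
  have h2 : inner ℝ (x - μ) ((d / 20 : ℝ) • g) = (d / 20) * (-t) := by
    rw [real_inner_smul_right, ht, real_inner_comm]
    have : x - μ = -(μ - x) := by abel
    rw [this, inner_neg_right]
  have hexp : ‖x + (d / 20) • g - μ‖ ^ 2
      = r ^ 2 + 2 * ((d / 20) * (-t)) + (d / 20) ^ 2 := by
    have : x + (d / 20) • g - μ = (x - μ) + (d / 20) • g := by abel
    rw [this, norm_add_sq_real, h2, norm_smul, hg, Real.norm_eq_abs, mul_one, sq_abs]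
  rw [hexp]
  nlinarith [mul_nonneg (by linarith : (0:ℝ) ≤ d - 0.95 * r) (by linarith : (0:ℝ) ≤ 1.25 * r - d),
    mul_nonneg (by linarith : (0:ℝ) ≤ d) (by linarith : (0:ℝ) ≤ t - r / 15), sq_nonneg r]
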